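/- Let d ∈ ℕ and let H₀, H₁ : EuclideanSpace ℝ (Fin d) → EuclideanSpace ℝ (Fin d) be twice continuously differentiable vector fields giving rise, for each h > 0, to a solution w_h : ℝ → EuclideanSpace ℝ (Fin d) of the modified equation ẇ(t) = H₀(w(t)) + h·H₁(w(t)) with w_h(0) = w₀ (i.e. HasDerivAt w_h (H₀(w_h t) + h • H₁(w_h t)) t for all t in [0,h]). Then, as h → 0⁺, w_h(h) = w₀ + h·H₀(w₀) + h²·(H₁(w₀) + (1/2)·(fderiv ℝ H₀ w₀)(H₀(w₀))) + O(h³). -/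

import Mathlib

open Asymptotics

lemma my_bootstrap {E : Type*} [NormedAddCommGroup E] [NormedSpace ℝ E]
    (f : ℝ → E) (f' : ℝ → E) (h r C : ℝ) (hh : 0 ≤ h) (hr : 0 < r)
    (hd : ∀ t ∈ Set.Icc (0:ℝ) h, HasDerivAt f (f' t) t)
    (hb : ∀ t ∈ Set.Icc (0:ℝ) h, ‖f t - f 0‖ ≤ r → ‖f' t‖ ≤ C)
    (hCh : C * h < r) :
    ∀ t ∈ Set.Icc (0:ℝ) h, ‖f t - f 0‖ ≤ C * t := by
  have hC : 0 ≤ C := by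
    have := hb 0 (Set.left_mem_Icc.2 hh) (by simp [hr.le])
    exact le_trans (norm_nonneg _) this
  set A : Set ℝ := {t ∈ Set.Icc (0:ℝ) h | ∀ s ∈ Set.Icc (0:ℝ) t, ‖f s - f 0‖ ≤ C * s} with hA
  have h0A : (0:ℝ) ∈ A := by
    refine ⟨Set.left_mem_Icc.2 hh, ?_⟩
    intro s hs
    have : s = 0 := le_antisymm hs.2 hs.1
    simp [this]
  have hAbdd : BddAbove A := ⟨h, fun t ht => ht.1.2⟩
  have hAne : A.Nonempty := ⟨0, h0A⟩
  set T := sSup A with hT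
  have hT0 : 0 ≤ T := le_csSup hAbdd h0A
  have hTh : T ≤ h := csSup_le hAne (fun t ht => ht.1.2)
  have hcont : ∀ t ∈ Set.Icc (0:ℝ) h, ContinuousAt f t := fun t ht => (hd t ht).continuousAt
  have hTA : T ∈ A := by
    refine ⟨⟨hT0, hTh⟩, ?_⟩
    intro s hs
    rcases lt_or_eq_of_le hs.2 with hlt | heq
    · obtain ⟨t, htA, hst⟩ := exists_lt_of_lt_csSup hAne hlt
      exact htA.2 s ⟨hs.1, hst.le⟩
    · rcases eq_or_lt_of_le hs.1 with h0 | h0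
      · simp [← h0]
      have : Filter.Tendsto (fun u => ‖f u - f 0‖) (nhdsWithin s (Set.Iio s)) (nhds ‖f s - f 0‖) := by
        have := (hcont s ⟨hs.1, le_trans hs.2 hTh⟩).tendsto
        exact ((this.sub tendsto_const_nhds).norm).mono_left nhdsWithin_le_nhds
      have hlim : Filter.Tendsto (fun u : ℝ => C * u) (nhdsWithin s (Set.Iio s)) (nhds (C * s)) :=
        ((continuous_const.mul continuous_id).tendsto s).mono_left nhdsWithin_le_nhds
      refine le_of_tendsto_of_tendsto this hlim ?_
      filter_upwards [Ioo_mem_nhdsLT_of_mem (Set.mem_Ioc.2 ⟨h0, le_refl s⟩)] with u hu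
      obtain ⟨t, htA, hut⟩ := exists_lt_of_lt_csSup hAne (heq ▸ hu.2)
      exact htA.2 u ⟨hu.1.le, hut.le⟩
  rcases eq_or_lt_of_le hTh with hThe | hThl
  · intro t ht
    exact hTA.2 t ⟨ht.1, ht.2.trans_eq hThe.symm⟩
  · exfalso
    have hball : ∀ s ∈ Set.Icc (0:ℝ) T, ‖f s - f 0‖ < r := by
      intro s hs
      calc ‖f s - f 0‖ ≤ C * s := hTA.2 s hs
        _ ≤ C * h := by nlinarith [hs.2, hTh]
        _ < r := hCh
    have hcT : ContinuousAt (fun u => ‖f u - f 0‖) T :=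
      ((hcont T ⟨hT0, hTh⟩).sub continuousAt_const).norm
    have hopen : ∀ᶠ u in nhds T, ‖f u - f 0‖ < r :=
      hcT.eventually_lt continuousAt_const (hball T ⟨hT0, le_refl T⟩)
    obtain ⟨ε, hε, hε'⟩ := Metric.eventually_nhds_iff.1 hopen
    set t₁ := min h (T + ε / 2) with ht₁
    have hTt₁ : T < t₁ := lt_min hThl (by linarith)
    have ht₁h : t₁ ≤ h := min_le_left _ _
    have hball' : ∀ s ∈ Set.Icc (0:ℝ) t₁, ‖f s - f 0‖ ≤ r := by
      intro s hs
      rcases le_or_gt s T with hsT | hsT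
      · exact (hball s ⟨hs.1, hsT⟩).le
      · refine (hε' ?_).le
        rw [Real.dist_eq, abs_of_pos (by linarith)]
        have : s ≤ T + ε / 2 := le_trans hs.2 (min_le_right _ _)
        linarith
    have hderb : ∀ s ∈ Set.Icc (0:ℝ) t₁, ‖f' s‖ ≤ C := by
      intro s hs
      exact hb s ⟨hs.1, hs.2.trans ht₁h⟩ (hball' s hs)
    have hmvt : ∀ s ∈ Set.Icc (0:ℝ) t₁, ‖f s - f 0‖ ≤ C * s := by
      intro s hs
      have := Convex.norm_image_sub_le_of_norm_hasDerivWithin_le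
        (f := f) (f' := f') (s := Set.Icc (0:ℝ) t₁) (C := C)
        (fun u hu => (hd u ⟨hu.1, hu.2.trans ht₁h⟩).hasDerivWithinAt)
        hderb (convex_Icc _ _) (Set.left_mem_Icc.2 (hT0.trans hTt₁.le)) hs
      simpa [Real.norm_eq_abs, abs_of_nonneg hs.1] using this
    have : t₁ ∈ A := ⟨⟨hT0.trans hTt₁.le, ht₁h⟩, hmvt⟩
    exact absurd (le_csSup hAbdd this) (not_le.2 hTt₁)

set_option maxHeartbeats 2000000 in
/-- **Taylor expansion of the solution of the modified equation** `ẇ = H₀(w) + h·H₁(w)`: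
as `h → 0⁺`, `w_h(h) = w₀ + h·H₀(w₀) + h²·(H₁(w₀) + ½(∇H₀(w₀))(H₀(w₀))) + O(h³)`. -/
theorem stmt_1 (d : ℕ) (H₀ H₁ : EuclideanSpace ℝ (Fin d) → EuclideanSpace ℝ (Fin d))
    (hH₀ : ContDiff ℝ 2 H₀) (hH₁ : ContDiff ℝ 2 H₁)
    (w₀ : EuclideanSpace ℝ (Fin d))
    (w : ℝ → ℝ → EuclideanSpace ℝ (Fin d))
    (hw0 : ∀ h : ℝ, 0 < h → w h 0 = w₀)
    (hw : ∀ h : ℝ, 0 < h → ∀ t ∈ Set.Icc (0 : ℝ) h,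
      HasDerivAt (w h) (H₀ (w h t) + h • H₁ (w h t)) t) :
    (fun h : ℝ =>
        w h h - w₀ - h • H₀ w₀
          - h ^ 2 • (H₁ w₀ + (1 / 2 : ℝ) • (fderiv ℝ H₀ w₀ (H₀ w₀))))
      =O[nhdsWithin 0 (Set.Ioi 0)] (fun h : ℝ => h ^ 3) := by
  set φ : EuclideanSpace ℝ (Fin d) →L[ℝ] EuclideanSpace ℝ (Fin d) := fderiv ℝ H₀ w₀ with hφ
  set g : EuclideanSpace ℝ (Fin d) := φ (H₀ w₀) with hg
  -- Lipschitz data near w₀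
  obtain ⟨K₀, t₀, ht₀, hl₀⟩ := ((hH₀.of_le one_le_two).contDiffAt).exists_lipschitzOnWith
  obtain ⟨K₁, t₁, ht₁, hl₁⟩ := ((hH₁.of_le one_le_two).contDiffAt).exists_lipschitzOnWith
  have hDH₀ : ContDiff ℝ 1 (fderiv ℝ H₀) := hH₀.fderiv_right (by norm_num)
  obtain ⟨K₂, t₂, ht₂, hl₂⟩ := (hDH₀.contDiffAt).exists_lipschitzOnWith
  obtain ⟨r, hr, hrsub⟩ := Metric.nhds_basis_closedBall.mem_iff.1
    (Filter.inter_mem (Filter.inter_mem ht₀ ht₁) ht₂)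
  set L : ℝ := (K₀ : ℝ) + K₁ + K₂ with hL
  have hL0 : 0 ≤ L := by positivity
  have hw₀mem : w₀ ∈ Metric.closedBall w₀ r := Metric.mem_closedBall_self hr.le
  have lip0 : ∀ x ∈ Metric.closedBall w₀ r, ‖H₀ x - H₀ w₀‖ ≤ L * ‖x - w₀‖ := by
    intro x hx
    have := hl₀.dist_le_mul x (hrsub hx).1.1 w₀ (hrsub hw₀mem).1.1
    rw [dist_eq_norm, dist_eq_norm] at this
    refine this.trans (mul_le_mul_of_nonneg_right ?_ (norm_nonneg _))
    rw [hL]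
    linarith [NNReal.coe_nonneg K₀, NNReal.coe_nonneg K₁, NNReal.coe_nonneg K₂]
  have lip1 : ∀ x ∈ Metric.closedBall w₀ r, ‖H₁ x - H₁ w₀‖ ≤ L * ‖x - w₀‖ := by
    intro x hx
    have := hl₁.dist_le_mul x (hrsub hx).1.2 w₀ (hrsub hw₀mem).1.2
    rw [dist_eq_norm, dist_eq_norm] at this
    refine this.trans (mul_le_mul_of_nonneg_right ?_ (norm_nonneg _))
    rw [hL]
    linarith [NNReal.coe_nonneg K₀, NNReal.coe_nonneg K₁, NNReal.coe_nonneg K₂]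
  have lip2 : ∀ x ∈ Metric.closedBall w₀ r, ‖fderiv ℝ H₀ x - φ‖ ≤ L * ‖x - w₀‖ := by
    intro x hx
    have := hl₂.dist_le_mul x (hrsub hx).2 w₀ (hrsub hw₀mem).2
    rw [dist_eq_norm, dist_eq_norm] at this
    refine this.trans (mul_le_mul_of_nonneg_right ?_ (norm_nonneg _))
    rw [hL]
    linarith [NNReal.coe_nonneg K₀, NNReal.coe_nonneg K₁, NNReal.coe_nonneg K₂]
  set M : ℝ := ‖H₀ w₀‖ + ‖H₁ w₀‖ + L * r with hM
  have hM0 : 0 ≤ M := by positivity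
  have bnd0 : ∀ x ∈ Metric.closedBall w₀ r, ‖H₀ x‖ ≤ M := by
    intro x hx
    have h1 := lip0 x hx
    have h2 : ‖x - w₀‖ ≤ r := by rw [← dist_eq_norm]; exact Metric.mem_closedBall.1 hx
    have := norm_sub_norm_le (H₀ x) (H₀ w₀)
    nlinarith [norm_nonneg (H₁ w₀)]
  have bnd1 : ∀ x ∈ Metric.closedBall w₀ r, ‖H₁ x‖ ≤ M := by
    intro x hx
    have h1 := lip1 x hx
    have h2 : ‖x - w₀‖ ≤ r := by rw [← dist_eq_norm]; exact Metric.mem_closedBall.1 hx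
    have := norm_sub_norm_le (H₁ x) (H₁ w₀)
    nlinarith [norm_nonneg (H₀ w₀)]
  set D : ℝ := ‖φ‖ with hD
  have hD0 : 0 ≤ D := norm_nonneg _
  set C₂ : ℝ := 2 * L * M + M with hC₂
  set C₃ : ℝ := 4 * L * M ^ 2 + D * C₂ + 2 * L * M with hC₃
  set δ : ℝ := min 1 (r / (2 * M + 1)) with hδdef
  have hδ0 : 0 < δ := lt_min one_pos (by positivity)
  rw [Asymptotics.isBigO_iff]
  refine ⟨C₃, ?_⟩
  filter_upwards [Ioo_mem_nhdsGT_of_mem (Set.mem_Ico.2 ⟨le_refl (0:ℝ), hδ0⟩)] with h hh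
  obtain ⟨h0, hδh⟩ := hh
  have h1 : h ≤ 1 := le_trans hδh.le (min_le_left _ _)
  have hδr : (2 * M + 1) * h < r := by
    have h2 : δ ≤ r / (2 * M + 1) := min_le_right _ _
    have h3 : (0:ℝ) < 2 * M + 1 := by linarith
    calc (2 * M + 1) * h < (2 * M + 1) * δ := by nlinarith
      _ ≤ (2 * M + 1) * (r / (2 * M + 1)) := by nlinarith
      _ = r := by field_simp
  -- a priori bound
  have h2Mh : 2 * M * h < r := by linarith
  have hbnd : ∀ t ∈ Set.Icc (0:ℝ) h, ‖w h t - w h 0‖ ≤ r →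
      ‖H₀ (w h t) + h • H₁ (w h t)‖ ≤ 2 * M := by
    intro t ht hmem
    rw [hw0 h h0] at hmem
    have hxm : w h t ∈ Metric.closedBall w₀ r := by
      rw [Metric.mem_closedBall, dist_eq_norm]; exact hmem
    have b0 := bnd0 _ hxm
    have b1 := bnd1 _ hxm
    calc ‖H₀ (w h t) + h • H₁ (w h t)‖ ≤ ‖H₀ (w h t)‖ + ‖h • H₁ (w h t)‖ := norm_add_le _ _
      _ = ‖H₀ (w h t)‖ + h * ‖H₁ (w h t)‖ := by
          rw [norm_smul, Real.norm_eq_abs, abs_of_pos h0]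
      _ ≤ M + 1 * M := by
          have := mul_le_mul h1 b1 (norm_nonneg _) zero_le_one
          linarith
      _ = 2 * M := by ring
  have B1 : ∀ t ∈ Set.Icc (0:ℝ) h, ‖w h t - w₀‖ ≤ 2 * M * t := by
    intro t ht
    have := my_bootstrap (w h) (fun t => H₀ (w h t) + h • H₁ (w h t)) h r (2 * M)
      h0.le hr (hw h h0) hbnd h2Mh t ht
    rwa [hw0 h h0] at this
  have Bball : ∀ t ∈ Set.Icc (0:ℝ) h, w h t ∈ Metric.closedBall w₀ r := by
    intro t ht
    rw [Metric.mem_closedBall, dist_eq_norm]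
    have := B1 t ht
    nlinarith [ht.2, hM0]
  have Bball2 : ∀ t ∈ Set.Icc (0:ℝ) h, w h t ∈ Metric.closedBall w₀ (2 * M * h) := by
    intro t ht
    rw [Metric.mem_closedBall, dist_eq_norm]
    have := B1 t ht
    nlinarith [ht.2, hM0]
  have hIccmem0 : (0:ℝ) ∈ Set.Icc (0:ℝ) h := Set.left_mem_Icc.2 h0.le
  have hIccmemh : h ∈ Set.Icc (0:ℝ) h := Set.right_mem_Icc.2 h0.le
  -- second-order a priori bound
  have B2 : ∀ t ∈ Set.Icc (0:ℝ) h, ‖w h t - w₀ - t • H₀ w₀‖ ≤ (C₂ * h) * t := by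
    intro t ht
    have hd2 : ∀ s ∈ Set.Icc (0:ℝ) h,
        HasDerivWithinAt (fun u => w h u - u • H₀ w₀)
          (H₀ (w h s) + h • H₁ (w h s) - H₀ w₀) (Set.Icc (0:ℝ) h) s := by
      intro s hs
      have h2 : HasDerivAt (fun u : ℝ => u • H₀ w₀) (H₀ w₀) s := by
        simpa using (hasDerivAt_id s).smul_const (H₀ w₀)
      exact ((hw h h0 s hs).sub h2).hasDerivWithinAt
    have hbd2 : ∀ s ∈ Set.Icc (0:ℝ) h,
        ‖H₀ (w h s) + h • H₁ (w h s) - H₀ w₀‖ ≤ C₂ * h := by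
      intro s hs
      have l0 := lip0 _ (Bball s hs)
      have b1 := bnd1 _ (Bball s hs)
      have hws := B1 s hs
      calc ‖H₀ (w h s) + h • H₁ (w h s) - H₀ w₀‖
          ≤ ‖H₀ (w h s) - H₀ w₀‖ + ‖h • H₁ (w h s)‖ := by
            rw [add_sub_right_comm]; exact norm_add_le _ _
        _ ≤ L * ‖w h s - w₀‖ + h * ‖H₁ (w h s)‖ := by
            rw [norm_smul, Real.norm_eq_abs, abs_of_pos h0]; linarith
        _ ≤ C₂ * h := by
            have e1 : L * ‖w h s - w₀‖ ≤ L * (2 * M * s) :=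
              mul_le_mul_of_nonneg_left hws hL0
            have e2 : 2 * M * s ≤ 2 * M * h :=
              mul_le_mul_of_nonneg_left hs.2 (by linarith)
            have e3 : L * (2 * M * s) ≤ L * (2 * M * h) :=
              mul_le_mul_of_nonneg_left e2 hL0
            have e4 : h * ‖H₁ (w h s)‖ ≤ h * M :=
              mul_le_mul_of_nonneg_left b1 h0.le
            rw [hC₂]
            nlinarith [e1, e3, e4]
    have := Convex.norm_image_sub_le_of_norm_hasDerivWithin_le hd2 hbd2 (convex_Icc _ _)
      hIccmem0 ht
    rw [hw0 h h0] at this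
    have heq : w h t - t • H₀ w₀ - (w₀ - (0:ℝ) • H₀ w₀) = w h t - w₀ - t • H₀ w₀ := by
      simp; abel
    rw [heq] at this
    simpa [Real.norm_eq_abs, abs_of_nonneg ht.1] using this
  -- main estimate via the function ψ
  set ψ : ℝ → EuclideanSpace ℝ (Fin d) :=
    fun t => w h t - t • H₀ w₀ - t • (h • H₁ w₀) - (t ^ 2 / 2) • g with hψdef
  have hψd : ∀ t ∈ Set.Icc (0:ℝ) h,
      HasDerivWithinAt ψ
        (H₀ (w h t) + h • H₁ (w h t) - H₀ w₀ - h • H₁ w₀ - t • g) (Set.Icc (0:ℝ) h) t := by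
    intro t ht
    have h2 : HasDerivAt (fun u : ℝ => u • H₀ w₀) (H₀ w₀) t := by
      simpa using (hasDerivAt_id t).smul_const (H₀ w₀)
    have h3 : HasDerivAt (fun u : ℝ => u • (h • H₁ w₀)) (h • H₁ w₀) t := by
      simpa using (hasDerivAt_id t).smul_const (h • H₁ w₀)
    have h4 : HasDerivAt (fun u : ℝ => (u ^ 2 / 2) • g) (t • g) t := by
      have := ((hasDerivAt_pow 2 t).div_const 2).smul_const g
      have e : ((2:ℕ) * t ^ (2 - 1) / 2 : ℝ) = t := by norm_num
      rw [e] at this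
      exact this
    exact ((((hw h h0 t ht).sub h2).sub h3).sub h4).hasDerivWithinAt
  have hψb : ∀ t ∈ Set.Icc (0:ℝ) h,
      ‖H₀ (w h t) + h • H₁ (w h t) - H₀ w₀ - h • H₁ w₀ - t • g‖ ≤ C₃ * h ^ 2 := by
    intro t ht
    -- Taylor remainder for H₀
    have hTay : ‖H₀ (w h t) - H₀ w₀ - φ (w h t - w₀)‖ ≤ (L * (2 * M * h)) * ‖w h t - w₀‖ := by
      refine Convex.norm_image_sub_le_of_norm_hasFDerivWithin_le'
        (f := H₀) (f' := fderiv ℝ H₀) (φ := φ)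
        (s := Metric.closedBall w₀ r ∩ Metric.closedBall w₀ (2 * M * h)) ?_ ?_
        ((convex_closedBall _ _).inter (convex_closedBall _ _)) ?_ ?_
      · intro x hx
        exact ((hH₀.differentiable (by norm_num)) x).hasFDerivAt.hasFDerivWithinAt
      · intro x hx
        refine (lip2 x hx.1).trans ?_
        have : ‖x - w₀‖ ≤ 2 * M * h := by
          rw [← dist_eq_norm]; exact Metric.mem_closedBall.1 hx.2
        nlinarith
      · exact ⟨hw₀mem, Metric.mem_closedBall_self (by positivity)⟩
      · exact ⟨Bball t ht, Bball2 t ht⟩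
    have key : H₀ (w h t) + h • H₁ (w h t) - H₀ w₀ - h • H₁ w₀ - t • g
        = (H₀ (w h t) - H₀ w₀ - φ (w h t - w₀)) + φ (w h t - w₀ - t • H₀ w₀)
          + h • (H₁ (w h t) - H₁ w₀) := by
      simp only [map_sub, map_smul, hg, smul_sub]
      abel
    rw [key]
    have n1 : ‖H₀ (w h t) - H₀ w₀ - φ (w h t - w₀)‖ ≤ 4 * L * M ^ 2 * h ^ 2 := by
      refine hTay.trans ?_
      have e2 : 2 * M * t ≤ 2 * M * h := mul_le_mul_of_nonneg_left ht.2 (by linarith)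
      have e0 : ‖w h t - w₀‖ ≤ 2 * M * h := (B1 t ht).trans e2
      have e3 : 0 ≤ L * (2 * M * h) :=
        mul_nonneg hL0 (mul_nonneg (by linarith) h0.le)
      calc L * (2 * M * h) * ‖w h t - w₀‖ ≤ L * (2 * M * h) * (2 * M * h) :=
            mul_le_mul_of_nonneg_left e0 e3
        _ = 4 * L * M ^ 2 * h ^ 2 := by ring
    have hC₂0 : 0 ≤ C₂ := by rw [hC₂]; nlinarith [mul_nonneg hL0 hM0]
    have n2 : ‖φ (w h t - w₀ - t • H₀ w₀)‖ ≤ D * C₂ * h ^ 2 := by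
      have hB2 := B2 t ht
      calc ‖φ (w h t - w₀ - t • H₀ w₀)‖ ≤ ‖φ‖ * ‖w h t - w₀ - t • H₀ w₀‖ :=
            φ.le_opNorm _
        _ = D * ‖w h t - w₀ - t • H₀ w₀‖ := by rw [hD]
        _ ≤ D * (C₂ * h * t) := mul_le_mul_of_nonneg_left hB2 hD0
        _ ≤ D * (C₂ * h * h) := by
            have := mul_le_mul_of_nonneg_left ht.2 (mul_nonneg hC₂0 h0.le)
            exact mul_le_mul_of_nonneg_left this hD0
        _ = D * C₂ * h ^ 2 := by ring
    have n3 : ‖h • (H₁ (w h t) - H₁ w₀)‖ ≤ 2 * L * M * h ^ 2 := by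
      rw [norm_smul, Real.norm_eq_abs, abs_of_pos h0]
      have hlip := lip1 _ (Bball t ht)
      have hB1 := B1 t ht
      calc h * ‖H₁ (w h t) - H₁ w₀‖ ≤ h * (L * ‖w h t - w₀‖) :=
            mul_le_mul_of_nonneg_left hlip h0.le
        _ ≤ h * (L * (2 * M * t)) :=
            mul_le_mul_of_nonneg_left (mul_le_mul_of_nonneg_left hB1 hL0) h0.le
        _ ≤ h * (L * (2 * M * h)) := by
            have e2 : 2 * M * t ≤ 2 * M * h :=
              mul_le_mul_of_nonneg_left ht.2 (by linarith)
            exact mul_le_mul_of_nonneg_left (mul_le_mul_of_nonneg_left e2 hL0) h0.le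
        _ = 2 * L * M * h ^ 2 := by ring
    calc ‖(H₀ (w h t) - H₀ w₀ - φ (w h t - w₀)) + φ (w h t - w₀ - t • H₀ w₀)
          + h • (H₁ (w h t) - H₁ w₀)‖
        ≤ ‖H₀ (w h t) - H₀ w₀ - φ (w h t - w₀)‖ + ‖φ (w h t - w₀ - t • H₀ w₀)‖
          + ‖h • (H₁ (w h t) - H₁ w₀)‖ := norm_add₃_le
      _ ≤ C₃ * h ^ 2 := by rw [hC₃]; nlinarith
  have final := Convex.norm_image_sub_le_of_norm_hasDerivWithin_le hψd hψb (convex_Icc _ _)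
    hIccmem0 hIccmemh
  have hψ0 : ψ 0 = w₀ := by simp [hψdef, hw0 h h0]
  have htarget : w h h - w₀ - h • H₀ w₀
      - h ^ 2 • (H₁ w₀ + (1 / 2 : ℝ) • (fderiv ℝ H₀ w₀ (H₀ w₀))) = ψ h - ψ 0 := by
    rw [hψ0, hψdef]
    simp only [← hφ, ← hg]
    module
  rw [htarget]
  refine final.trans ?_
  have : ‖h - 0‖ = h := by rw [sub_zero, Real.norm_eq_abs, abs_of_pos h0]
  rw [this, Real.norm_eq_abs, abs_of_pos (pow_pos h0 3)]
  nlinarith [sq_nonneg h]
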